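/- Fix λ ∈ (0,1). Suppose the null p-values are superuniform, p_j is independent of the remaining coordinates p_{-j} for each j ∈ H0, and the filter F is simple. Then the Focused Storey BH procedure at level q controls the generalized false discovery rate: FDR_F = E[FDP(U*)] ≤ q. -/

import Mathlib

open MeasureTheory Finset

/-- Total prioritization weight of a prioritization vector. -/
noncomputable def normU {m : ℕ} (U : Fin m → ℝ) : ℝ := ∑ j, U j

/-- Threshold rejection set `R(t,p) = {j : p_j ≤ t}`. -/
noncomputable def Rset {m : ℕ} (t : ℝ) (p : Fin m → ℝ) : Finset (Fin m) :=
  Finset.univ.filter (fun j => p j ≤ t)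

/-- Focused BH FDP estimate `m·t / ‖F(R(t,p),p)‖` (with `x/0 = 0`). -/
noncomputable def FDPhat {m : ℕ} (F : Finset (Fin m) → (Fin m → ℝ) → (Fin m → ℝ))
    (p : Fin m → ℝ) (t : ℝ) : ℝ :=
  (m : ℝ) * t / normU (F (Rset t p) p)

/-- The Focused BH threshold: the largest `t ∈ {0, p_1, ..., p_m}` with `FDPhat(t) ≤ q`. -/
noncomputable def tstar {m : ℕ} (F : Finset (Fin m) → (Fin m → ℝ) → (Fin m → ℝ))
    (q : ℝ) (p : Fin m → ℝ) : ℝ :=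
  sSup {t : ℝ | (t = 0 ∨ ∃ j, t = p j) ∧ FDPhat F p t ≤ q}

/-- Generalized FDP of a prioritization vector (with `0/0 = 0`). -/
noncomputable def genFDP {m : ℕ} (H0 : Finset (Fin m)) (U : Fin m → ℝ) : ℝ :=
  (∑ j ∈ H0, U j) / (∑ j, U j)

/-- A filter outputs prioritization scores in `[0,1]`, vanishing outside the rejection set. -/
def IsFilter {m : ℕ} (F : Finset (Fin m) → (Fin m → ℝ) → (Fin m → ℝ)) : Prop :=
  ∀ (R : Finset (Fin m)) (x : Fin m → ℝ) (j : Fin m),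
    (j ∉ R → F R x j = 0) ∧ F R x j ∈ Set.Icc (0 : ℝ) 1

/-- Null p-values are superuniform. -/
def Superuniform {Ω : Type*} [MeasurableSpace Ω] (μ : Measure Ω) {m : ℕ}
    (p : Ω → Fin m → ℝ) (H0 : Finset (Fin m)) : Prop :=
  ∀ j ∈ H0, ∀ t ∈ Set.Icc (0 : ℝ) 1, μ {ω | p ω j ≤ t} ≤ ENNReal.ofReal t

/-- Storey's null-proportion estimate `(1 + #{j : p_j > λ})/(1-λ)`. -/
noncomputable def m0hat {m : ℕ} (lam : ℝ) (p : Fin m → ℝ) : ℝ :=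
  (1 + ((Finset.univ.filter (fun j : Fin m => lam < p j)).card : ℝ)) / (1 - lam)

/-- The Focused Storey BH FDP estimate `m0hat^λ(p)·t / ‖F(R(t,p),p)‖` (with `x/0 = 0`). -/
noncomputable def FDPhatStorey {m : ℕ} (F : Finset (Fin m) → (Fin m → ℝ) → (Fin m → ℝ))
    (lam : ℝ) (p : Fin m → ℝ) (t : ℝ) : ℝ :=
  m0hat lam p * t / normU (F (Rset t p) p)

/-- The Focused Storey BH threshold: the largest `t ∈ {0, p_1, ..., p_m} ∩ [0,λ]` with
`FDPhat^Storey(t) ≤ q`. -/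
noncomputable def tstarStorey {m : ℕ} (F : Finset (Fin m) → (Fin m → ℝ) → (Fin m → ℝ))
    (lam q : ℝ) (p : Fin m → ℝ) : ℝ :=
  sSup {t : ℝ | (t = 0 ∨ ∃ j, t = p j) ∧ t ≤ lam ∧ FDPhatStorey F lam p t ≤ q}

/-- A filter is simple: if `p1, p2` differ only in coordinate `j` and `j` can receive a
positive prioritization score under both, then the total weight `‖F(R,·)‖` agrees on `p1, p2`
for every rejection set containing `j`. -/
def SimpleFilter {m : ℕ} (F : Finset (Fin m) → (Fin m → ℝ) → (Fin m → ℝ)) : Prop :=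
  ∀ (j : Fin m) (p1 p2 : Fin m → ℝ), (∀ i, i ≠ j → p1 i = p2 i) →
    (∃ R10 : Finset (Fin m), 0 < F R10 p1 j) →
    (∃ R20 : Finset (Fin m), 0 < F R20 p2 j) →
    ∀ R : Finset (Fin m), j ∈ R → normU (F R p1) = normU (F R p2)

section Det

variable {m : ℕ} {F : Finset (Fin m) → (Fin m → ℝ) → (Fin m → ℝ)}
variable {lam q : ℝ}

/-- The candidate set whose sup is `tstarStorey`. -/
def Aset (F : Finset (Fin m) → (Fin m → ℝ) → (Fin m → ℝ)) (lam q : ℝ) (x : Fin m → ℝ) :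
    Set ℝ :=
  {t : ℝ | (t = 0 ∨ ∃ j, t = x j) ∧ t ≤ lam ∧ FDPhatStorey F lam x t ≤ q}

lemma tstarStorey_eq_sSup_Aset (x : Fin m → ℝ) :
    tstarStorey F lam q x = sSup (Aset F lam q x) := rfl

lemma Aset_subset (x : Fin m → ℝ) : Aset F lam q x ⊆ insert 0 (Set.range x) := by
  rintro t ⟨h1, -, -⟩
  rcases h1 with h | ⟨j, hj⟩
  · exact Or.inl h
  · exact Or.inr ⟨j, hj.symm⟩

lemma Aset_finite (x : Fin m → ℝ) : (Aset F lam q x).Finite :=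
  Set.Finite.subset (Set.Finite.insert 0 (Set.finite_range x)) (Aset_subset x)

lemma FDPhatStorey_zero (x : Fin m → ℝ) : FDPhatStorey F lam x 0 = 0 := by
  simp [FDPhatStorey]

lemma zero_mem_Aset (hlam : 0 ≤ lam) (hq : 0 ≤ q) (x : Fin m → ℝ) :
    (0 : ℝ) ∈ Aset F lam q x := by
  refine ⟨Or.inl rfl, hlam, ?_⟩
  rw [FDPhatStorey_zero]; exact hq

lemma tstar_mem_Aset (hlam : 0 ≤ lam) (hq : 0 ≤ q) (x : Fin m → ℝ) :
    tstarStorey F lam q x ∈ Aset F lam q x :=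
  Set.Nonempty.csSup_mem ⟨0, zero_mem_Aset hlam hq x⟩ (Aset_finite x)

lemma le_tstar_of_mem {x : Fin m → ℝ} {t : ℝ} (ht : t ∈ Aset F lam q x) :
    t ≤ tstarStorey F lam q x :=
  le_csSup (Set.Finite.bddAbove (Aset_finite x)) ht

lemma tstar_nonneg (hlam : 0 ≤ lam) (hq : 0 ≤ q) (x : Fin m → ℝ) :
    0 ≤ tstarStorey F lam q x :=
  le_tstar_of_mem (zero_mem_Aset hlam hq x)

lemma tstar_le_lam (hlam : 0 ≤ lam) (hq : 0 ≤ q) (x : Fin m → ℝ) :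
    tstarStorey F lam q x ≤ lam :=
  (tstar_mem_Aset hlam hq x).2.1

lemma normU_nonneg (hF : IsFilter F) (R : Finset (Fin m)) (x : Fin m → ℝ) :
    0 ≤ normU (F R x) :=
  Finset.sum_nonneg fun j _ => (hF R x j).2.1

lemma m0hat_pos (hlam : lam < 1) (x : Fin m → ℝ) : 0 < m0hat lam x := by
  apply div_pos
  · positivity
  · linarith

end Det

section Key

variable {m : ℕ} {F : Finset (Fin m) → (Fin m → ℝ) → (Fin m → ℝ)} {lam q : ℝ}

lemma mem_Rset {t : ℝ} {x : Fin m → ℝ} {i : Fin m} : i ∈ Rset t x ↔ x i ≤ t := by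
  simp [Rset]

/-- Key leave-one-out lemma: if `z'` agrees with `z` off coordinate `j`, both admit a
positive witness for `j`, `z' j ≤ z j` and `z j ≤ t*(z)`, then the rejection set at the
respective thresholds is the same and the filter weights agree. -/
lemma key_lemma (hF : IsFilter F) (hsimple : SimpleFilter F)
    (hlam0 : 0 ≤ lam) (hlam1 : lam < 1) (hq : 0 ≤ q)
    (j : Fin m) (z z' : Fin m → ℝ) (hagree : ∀ i, i ≠ j → z' i = z i)
    (hw' : ∃ R, 0 < F R z' j) (hw : ∃ R, 0 < F R z j)
    (hle : z' j ≤ z j) (hzj : z j ≤ tstarStorey F lam q z) :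
    Rset (tstarStorey F lam q z') z' = Rset (tstarStorey F lam q z) z ∧
      normU (F (Rset (tstarStorey F lam q z') z') z')
        = normU (F (Rset (tstarStorey F lam q z) z) z) := by
  set t2 := tstarStorey F lam q z with ht2
  have ht2mem : t2 ∈ Aset F lam q z := tstar_mem_Aset hlam0 hq z
  have ht2lam : t2 ≤ lam := ht2mem.2.1
  have ht2nonneg : (0:ℝ) ≤ t2 := tstar_nonneg hlam0 hq z
  have hz'le : z' j ≤ t2 := le_trans hle hzj
  -- simplicity: norms agree on rejection sets containing j
  have hnorm : ∀ R : Finset (Fin m), j ∈ R → normU (F R z') = normU (F R z) :=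
    hsimple j z' z hagree hw' hw
  -- m0hat agree
  have hm0 : m0hat lam z' = m0hat lam z := by
    have hsets : (Finset.univ.filter (fun i : Fin m => lam < z' i))
        = (Finset.univ.filter (fun i : Fin m => lam < z i)) := by
      apply Finset.filter_congr
      intro i _
      by_cases hij : i = j
      · subst hij
        constructor
        · intro h; linarith
        · intro h; linarith
      · rw [hagree i hij]
    unfold m0hat
    rw [hsets]
  -- the candidate t''
  have hcand_ne : (((insert (0:ℝ) (Finset.image z' Finset.univ)).filter (· ≤ t2))).Nonempty := by
    refine ⟨0, ?_⟩
    simp [ht2nonneg]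
  set t'' := (((insert (0:ℝ) (Finset.image z' Finset.univ)).filter (· ≤ t2))).max' hcand_ne
    with ht''def
  have ht''mem := Finset.max'_mem _ hcand_ne
  rw [Finset.mem_filter] at ht''mem
  have ht''le : t'' ≤ t2 := ht''mem.2
  have ht''cand : t'' = 0 ∨ ∃ i, t'' = z' i := by
    rcases Finset.mem_insert.mp ht''mem.1 with h | h
    · exact Or.inl h
    · rcases Finset.mem_image.mp h with ⟨i, -, hi⟩
      exact Or.inr ⟨i, hi.symm⟩
  have hs1le : z' j ≤ t'' := by
    apply Finset.le_max'
    rw [Finset.mem_filter]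
    exact ⟨Finset.mem_insert_of_mem (Finset.mem_image_of_mem _ (Finset.mem_univ j)), hz'le⟩
  -- R(t'', z') = R(t2, z)
  have hRset : Rset t'' z' = Rset t2 z := by
    ext i
    rw [mem_Rset, mem_Rset]
    by_cases hij : i = j
    · subst hij
      constructor
      · intro _; exact hzj
      · intro _; exact hs1le
    · rw [hagree i hij]
      constructor
      · intro h; exact le_trans h ht''le
      · intro h
        apply Finset.le_max'
        rw [Finset.mem_filter]
        refine ⟨Finset.mem_insert_of_mem ?_, h⟩
        rw [← hagree i hij]
        exact Finset.mem_image_of_mem _ (Finset.mem_univ i)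
  have hjR : j ∈ Rset t2 z := mem_Rset.mpr hzj
  -- t'' ∈ Aset z'
  have ht''A : t'' ∈ Aset F lam q z' := by
    refine ⟨ht''cand, le_trans ht''le ht2lam, ?_⟩
    have h1 : FDPhatStorey F lam z' t'' = m0hat lam z * t'' / normU (F (Rset t2 z) z) := by
      rw [FDPhatStorey, hRset, hnorm _ hjR, hm0]
    rw [h1]
    have h2 : FDPhatStorey F lam z t2 ≤ q := ht2mem.2.2
    rw [FDPhatStorey] at h2
    have hm0pos : 0 < m0hat lam z := m0hat_pos hlam1 z
    calc m0hat lam z * t'' / normU (F (Rset t2 z) z)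
        ≤ m0hat lam z * t2 / normU (F (Rset t2 z) z) := by
          exact div_le_div_of_nonneg_right
            (mul_le_mul_of_nonneg_left ht''le (le_of_lt hm0pos))
            (normU_nonneg hF (Rset t2 z) z)
      _ ≤ q := h2
  -- T z' ≤ t2
  have hT'mem : tstarStorey F lam q z' ∈ Aset F lam q z' := tstar_mem_Aset hlam0 hq z'
  have hT'le : tstarStorey F lam q z' ≤ t2 := by
    by_contra hcon
    push_neg at hcon
    -- then T z' is a candidate of z, in Aset z, so ≤ t2; contradiction
    set t1 := tstarStorey F lam q z' with ht1
    have hcand1 : t1 = 0 ∨ ∃ i, t1 = z i := by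
      rcases hT'mem.1 with h | ⟨i, hi⟩
      · exact Or.inl h
      · by_cases hij : i = j
        · exfalso; subst hij; rw [hi] at hcon; linarith
        · exact Or.inr ⟨i, by rw [hi, hagree i hij]⟩
    have hR1 : Rset t1 z = Rset t1 z' := by
      ext i
      rw [mem_Rset, mem_Rset]
      by_cases hij : i = j
      · subst hij
        constructor
        · intro _; linarith
        · intro _; linarith
      · rw [hagree i hij]
    have hjR1 : j ∈ Rset t1 z' := mem_Rset.mpr (by linarith)
    have hA1 : t1 ∈ Aset F lam q z := by
      refine ⟨hcand1, hT'mem.2.1, ?_⟩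
      have hthis := hT'mem.2.2
      rw [FDPhatStorey] at hthis ⊢
      rw [hR1, ← hm0, ← hnorm _ hjR1]
      exact hthis
    exact absurd (le_tstar_of_mem hA1) (not_le.mpr hcon)
  -- T z' ≥ t'' hence = t''
  have hT'ge : t'' ≤ tstarStorey F lam q z' := le_tstar_of_mem ht''A
  have hT'le'' : tstarStorey F lam q z' ≤ t'' := by
    apply Finset.le_max'
    rw [Finset.mem_filter]
    constructor
    · rcases hT'mem.1 with h | ⟨i, hi⟩
      · rw [h]; exact Finset.mem_insert_self 0 _
      · rw [hi]
        exact Finset.mem_insert_of_mem (Finset.mem_image_of_mem _ (Finset.mem_univ i))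
    · exact hT'le
  have hT'eq : tstarStorey F lam q z' = t'' := le_antisymm hT'le'' hT'ge
  rw [hT'eq, hRset]
  exact ⟨rfl, hnorm _ hjR⟩

end Key

section TermBound

variable {m : ℕ} {F : Finset (Fin m) → (Fin m → ℝ) → (Fin m → ℝ)} {lam q : ℝ}

/-- The contribution of coordinate `j` to the generalized FDP. -/
noncomputable def termj (F : Finset (Fin m) → (Fin m → ℝ) → (Fin m → ℝ)) (lam q : ℝ)
    (j : Fin m) (x : Fin m → ℝ) : ℝ :=
  F (Rset (tstarStorey F lam q x) x) x j
    / normU (F (Rset (tstarStorey F lam q x) x) x)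

lemma termj_nonneg (hF : IsFilter F) (j : Fin m) (x : Fin m → ℝ) :
    0 ≤ termj F lam q j x :=
  div_nonneg (hF _ x j).2.1 (normU_nonneg hF _ x)

lemma termj_pos_facts (hF : IsFilter F) {j : Fin m} {x : Fin m → ℝ}
    (h : 0 < termj F lam q j x) :
    0 < normU (F (Rset (tstarStorey F lam q x) x) x) ∧
      0 < F (Rset (tstarStorey F lam q x) x) x j ∧
      x j ≤ tstarStorey F lam q x := by
  have hNnn := normU_nonneg hF (Rset (tstarStorey F lam q x) x) x
  rcases eq_or_lt_of_le hNnn with hN | hN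
  · exfalso
    rw [termj, ← hN, div_zero] at h
    exact lt_irrefl 0 h
  have hnum : 0 < F (Rset (tstarStorey F lam q x) x) x j := by
    have := h
    rw [termj] at this
    by_contra hcon
    push_neg at hcon
    have : F (Rset (tstarStorey F lam q x) x) x j / normU (F (Rset (tstarStorey F lam q x) x) x) ≤ 0 :=
      div_nonpos_of_nonpos_of_nonneg hcon hNnn
    rw [termj] at h
    linarith
  refine ⟨hN, hnum, ?_⟩
  have hjmem : j ∈ Rset (tstarStorey F lam q x) x := by
    by_contra hcon
    rw [(hF _ x j).1 hcon] at hnum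
    exact lt_irrefl 0 hnum
  exact mem_Rset.mp hjmem

/-- The pointwise indicator bound: once `termj` is positive at a reference point `x0`,
for every `x` agreeing with `x0` off `j` the term is dominated by an indicator in `x j`. -/
lemma termj_le_indicator (hF : IsFilter F) (hsimple : SimpleFilter F)
    (hlam0 : 0 ≤ lam) (hlam1 : lam < 1) (hq : 0 ≤ q)
    (j : Fin m) (x0 : Fin m → ℝ) (hpos : 0 < termj F lam q j x0)
    (x : Fin m → ℝ) (hagree : ∀ i, i ≠ j → x i = x0 i) :
    termj F lam q j x ≤
      Set.indicator {s : ℝ | s ≤ q * normU (F (Rset (tstarStorey F lam q x0) x0) x0) * (1 - lam)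
          / (1 + ((Finset.univ.filter (fun i : Fin m => i ≠ j ∧ lam < x0 i)).card : ℝ))}
        (fun _ => 1 / normU (F (Rset (tstarStorey F lam q x0) x0) x0)) (x j) := by
  set V := normU (F (Rset (tstarStorey F lam q x0) x0) x0) with hV
  set C : ℝ := ((Finset.univ.filter (fun i : Fin m => i ≠ j ∧ lam < x0 i)).card : ℝ) with hC
  set c := q * V * (1 - lam) / (1 + C) with hc
  obtain ⟨hV0, hnum0, hle0⟩ := termj_pos_facts hF hpos
  have hCnn : (0:ℝ) ≤ C := by positivity
  have hcnn : 0 ≤ c := by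
    apply div_nonneg _ (by linarith)
    have : (0:ℝ) ≤ q * V := mul_nonneg hq (le_of_lt hV0)
    nlinarith
  by_cases hxpos : 0 < termj F lam q j x
  swap
  · have h1 : termj F lam q j x ≤ 0 := le_of_not_gt hxpos
    apply le_trans h1
    apply Set.indicator_nonneg
    intro s _
    positivity
  obtain ⟨hVx, hnumx, hlex⟩ := termj_pos_facts hF hxpos
  -- witnesses
  have hwx : ∃ R, 0 < F R x j := ⟨_, hnumx⟩
  have hw0 : ∃ R, 0 < F R x0 j := ⟨_, hnum0⟩
  -- norm equality via key lemma
  have hNeq : normU (F (Rset (tstarStorey F lam q x) x) x) = V := by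
    rcases le_total (x j) (x0 j) with hcase | hcase
    · exact (key_lemma hF hsimple hlam0 hlam1 hq j x0 x hagree hwx hw0 hcase hle0).2
    · have hagree' : ∀ i, i ≠ j → x0 i = x i := fun i hi => (hagree i hi).symm
      exact ((key_lemma hF hsimple hlam0 hlam1 hq j x x0 hagree' hw0 hwx hcase hlex).2).symm
  -- m0hat x = (1+C)/(1-lam)
  have hTlam : tstarStorey F lam q x ≤ lam := tstar_le_lam hlam0 hq x
  have hxjlam : x j ≤ lam := le_trans hlex hTlam
  have hm0x : m0hat lam x = (1 + C) / (1 - lam) := by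
    have hsets : (Finset.univ.filter (fun i : Fin m => lam < x i))
        = (Finset.univ.filter (fun i : Fin m => i ≠ j ∧ lam < x0 i)) := by
      apply Finset.filter_congr
      intro i _
      by_cases hij : i = j
      · subst hij
        constructor
        · intro h; exact absurd h (not_lt.mpr hxjlam)
        · intro h; exact absurd rfl h.1
      · rw [hagree i hij]
        constructor
        · intro h; exact ⟨hij, h⟩
        · intro h; exact h.2
    rw [m0hat, hsets]
  -- T x ≤ c
  have hTA := tstar_mem_Aset (F := F) (lam := lam) (q := q) hlam0 hq x
  have hFDP := hTA.2.2
  rw [FDPhatStorey, hNeq] at hFDP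
  have hm0pos : (0:ℝ) < (1 + C) / (1 - lam) := by
    apply div_pos (by linarith) (by linarith)
  have hTc : tstarStorey F lam q x ≤ c := by
    rw [hm0x] at hFDP
    have h2 : (1 + C) / (1 - lam) * tstarStorey F lam q x ≤ q * V :=
      (div_le_iff₀ hV0).mp hFDP
    have h3 : (1 + C) * tstarStorey F lam q x ≤ q * V * (1 - lam) := by
      rw [div_mul_eq_mul_div, div_le_iff₀ (by linarith : (0:ℝ) < 1 - lam)] at h2
      linarith
    rw [hc, le_div_iff₀ (by linarith : (0:ℝ) < 1 + C)]
    linarith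
  have hxjc : x j ∈ {s : ℝ | s ≤ c} := Set.mem_setOf.mpr (le_trans hlex hTc)
  rw [Set.indicator_of_mem hxjc]
  rw [termj, hNeq]
  exact div_le_div_of_nonneg_right (hF _ x j).2.2 (le_of_lt hV0)

end TermBound

section Meas

variable {m : ℕ} {F : Finset (Fin m) → (Fin m → ℝ) → (Fin m → ℝ)} {lam q : ℝ}

lemma measurable_finset_sup' {ι δ : Type*} [MeasurableSpace δ] (s : Finset ι)
    (hs : s.Nonempty) (f : ι → δ → ℝ) (hf : ∀ i, Measurable (f i)) :
    Measurable fun x => s.sup' hs (fun i => f i x) := by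
  induction hs using Finset.Nonempty.cons_induction with
  | singleton i => simpa using hf i
  | cons a s ha hs ih =>
    have heq : (fun x => (Finset.cons a s ha).sup' (Finset.cons_nonempty ha)
        (fun i => f i x)) = fun x => max (f a x) (s.sup' hs (fun i => f i x)) := by
      funext x
      rw [Finset.sup'_cons hs]
    rw [heq]
    exact (hf a).max ih

lemma measurableSet_Rset_eq {e : (Fin m → ℝ) → ℝ} (he : Measurable e)
    (R : Finset (Fin m)) : MeasurableSet {x : Fin m → ℝ | Rset (e x) x = R} := by
  have heq : {x : Fin m → ℝ | Rset (e x) x = R}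
      = ⋂ i : Fin m, {x : Fin m → ℝ | x i ≤ e x ↔ i ∈ R} := by
    ext x
    simp only [Set.mem_setOf_eq, Set.mem_iInter]
    constructor
    · intro h i
      rw [← h, mem_Rset]
    · intro h
      ext i
      rw [mem_Rset]
      exact h i
  rw [heq]
  apply MeasurableSet.iInter
  intro i
  by_cases hiR : i ∈ R
  · simp only [hiR, iff_true]
    exact measurableSet_le (measurable_pi_apply i) he
  · simp only [hiR, iff_false, not_le]
    exact measurableSet_lt he (measurable_pi_apply i)

lemma measurable_comp_Rset {e : (Fin m → ℝ) → ℝ} (he : Measurable e)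
    {g : Finset (Fin m) → (Fin m → ℝ) → ℝ} (hg : ∀ R, Measurable (g R)) :
    Measurable fun x => g (Rset (e x) x) x := by
  have heq : (fun x => g (Rset (e x) x) x)
      = fun x => ∑ R : Finset (Fin m), if Rset (e x) x = R then g R x else 0 := by
    funext x
    rw [Finset.sum_eq_single (Rset (e x) x)]
    · rw [if_pos rfl]
    · intro R _ hR
      rw [if_neg (fun h => hR h.symm)]
    · intro h
      exact absurd (Finset.mem_univ _) h
  rw [heq]
  apply Finset.measurable_sum
  intro R _
  exact Measurable.ite (measurableSet_Rset_eq he R) (hg R) measurable_const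

lemma measurable_normU_F (hFmeas : ∀ (R : Finset (Fin m)) (j : Fin m),
    Measurable (fun x : Fin m → ℝ => F R x j)) (R : Finset (Fin m)) :
    Measurable fun x : Fin m → ℝ => normU (F R x) := by
  unfold normU
  exact Finset.measurable_sum _ (fun j _ => hFmeas R j)

lemma measurable_m0hat : Measurable (fun x : Fin m → ℝ => m0hat lam x) := by
  unfold m0hat
  apply Measurable.div _ measurable_const
  apply Measurable.add measurable_const
  have : (fun x : Fin m → ℝ => ((Finset.univ.filter (fun j : Fin m => lam < x j)).card : ℝ))
      = fun x => ∑ j : Fin m, if lam < x j then (1:ℝ) else 0 := by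
    funext x
    rw [Finset.card_filter]
    push_cast
    rfl
  rw [this]
  apply Finset.measurable_sum
  intro j _
  exact Measurable.ite (measurableSet_lt measurable_const (measurable_pi_apply j))
    measurable_const measurable_const

lemma measurable_FDPhatStorey_at (hFmeas : ∀ (R : Finset (Fin m)) (j : Fin m),
    Measurable (fun x : Fin m → ℝ => F R x j)) (i : Fin m) :
    Measurable fun x : Fin m → ℝ => FDPhatStorey F lam x (x i) := by
  unfold FDPhatStorey
  apply Measurable.div
  · exact measurable_m0hat.mul (measurable_pi_apply i)
  · exact measurable_comp_Rset (measurable_pi_apply i)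
      (fun R => measurable_normU_F hFmeas R)

lemma tstar_eq_sup' (hlam0 : 0 ≤ lam) (hq : 0 ≤ q) (x : Fin m → ℝ) :
    tstarStorey F lam q x = (Finset.univ : Finset (Option (Fin m))).sup'
      ⟨none, Finset.mem_univ _⟩
      (fun o => Option.elim o 0 (fun i =>
        if x i ≤ lam ∧ FDPhatStorey F lam x (x i) ≤ q then x i else 0)) := by
  set g : Option (Fin m) → ℝ := fun o => Option.elim o 0 (fun i =>
    if x i ≤ lam ∧ FDPhatStorey F lam x (x i) ≤ q then x i else 0) with hg
  apply le_antisymm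
  · obtain ⟨hcand, hlamle, hfdp⟩ := tstar_mem_Aset (F := F) (lam := lam) (q := q) hlam0 hq x
    rcases hcand with h0 | ⟨i, hi⟩
    · have h1 := Finset.le_sup' g (Finset.mem_univ none)
      have h2 : g none = 0 := rfl
      rw [h2] at h1
      rw [h0]
      exact h1
    · have h1 := Finset.le_sup' g (Finset.mem_univ (some i))
      have h2 : g (some i) = if x i ≤ lam ∧ FDPhatStorey F lam x (x i) ≤ q
          then x i else 0 := rfl
      rw [h2, if_pos ⟨hi ▸ hlamle, hi ▸ hfdp⟩] at h1
      rw [hi]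
      exact h1
  · apply Finset.sup'_le
    intro o _
    match o with
    | none => exact tstar_nonneg hlam0 hq x
    | some i =>
      show (if x i ≤ lam ∧ FDPhatStorey F lam x (x i) ≤ q then x i else 0)
        ≤ tstarStorey F lam q x
      split_ifs with hcond
      · exact le_tstar_of_mem ⟨Or.inr ⟨i, rfl⟩, hcond.1, hcond.2⟩
      · exact tstar_nonneg hlam0 hq x

lemma measurable_tstar (hFmeas : ∀ (R : Finset (Fin m)) (j : Fin m),
    Measurable (fun x : Fin m → ℝ => F R x j)) (hlam0 : 0 ≤ lam) (hq : 0 ≤ q) :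
    Measurable (tstarStorey F lam q) := by
  have heq : tstarStorey F lam q = fun x =>
      (Finset.univ : Finset (Option (Fin m))).sup' ⟨none, Finset.mem_univ _⟩
      (fun o => (fun o' => Option.elim o' 0 (fun i =>
        if x i ≤ lam ∧ FDPhatStorey F lam x (x i) ≤ q then x i else 0)) o) := by
    funext x
    exact tstar_eq_sup' hlam0 hq x
  rw [heq]
  apply measurable_finset_sup'
  intro o
  match o with
  | none => exact measurable_const
  | some i =>
    apply Measurable.ite _ (measurable_pi_apply i) measurable_const
    have h1 : MeasurableSet {x : Fin m → ℝ | x i ≤ lam} :=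
      measurableSet_le (measurable_pi_apply i) measurable_const
    have h2 : MeasurableSet {x : Fin m → ℝ | FDPhatStorey F lam x (x i) ≤ q} :=
      measurableSet_le (measurable_FDPhatStorey_at hFmeas i) measurable_const
    exact h1.inter h2

lemma measurable_termj (hFmeas : ∀ (R : Finset (Fin m)) (j : Fin m),
    Measurable (fun x : Fin m → ℝ => F R x j)) (hlam0 : 0 ≤ lam) (hq : 0 ≤ q) (j : Fin m) :
    Measurable (termj F lam q j) := by
  unfold termj
  exact measurable_comp_Rset (measurable_tstar hFmeas hlam0 hq)
    (g := fun R x => F R x j / normU (F R x))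
    (fun R => (hFmeas R j).div (measurable_normU_F hFmeas R))

end Meas

section Prob

open ProbabilityTheory

variable {m : ℕ} {F : Finset (Fin m) → (Fin m → ℝ) → (Fin m → ℝ)} {lam q : ℝ}

/-- Reconstruct a vector from coordinate `j` and the rest. -/
noncomputable def embj (j : Fin m) (z : ℝ × ({i : Fin m // i ≠ j} → ℝ)) : Fin m → ℝ :=
  fun i => if h : i = j then z.1 else z.2 ⟨i, h⟩

lemma embj_apply_eq (j : Fin m) (z : ℝ × ({i : Fin m // i ≠ j} → ℝ)) :
    embj j z j = z.1 := dif_pos rfl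

lemma embj_apply_ne {j i : Fin m} (h : i ≠ j) (z : ℝ × ({i : Fin m // i ≠ j} → ℝ)) :
    embj j z i = z.2 ⟨i, h⟩ := dif_neg h

lemma measurable_embj (j : Fin m) : Measurable (embj (m := m) j) := by
  apply measurable_pi_lambda
  intro i
  by_cases h : i = j
  · subst h
    simp only [embj, dif_pos rfl]
    exact measurable_fst
  · simp only [embj, dif_neg h]
    exact (measurable_pi_apply (⟨i, h⟩ : {i : Fin m // i ≠ j})).comp measurable_snd

lemma embj_pair (p : Fin m → ℝ) (j : Fin m) :
    embj j (p j, fun i : {i : Fin m // i ≠ j} => p i) = p := by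
  funext i
  by_cases h : i = j
  · subst h; exact dif_pos rfl
  · exact dif_neg h

/-- Decomposition of a lintegral of a bounded ℕ-valued composition over level sets. -/
lemma lintegral_nat_decomp {δ : Type*} [MeasurableSpace δ] (ν : Measure δ)
    (f : δ → ℕ) (hf : Measurable f) (M : ℕ) (hfle : ∀ a, f a ≤ M) (φ : ℕ → ENNReal)
    (A : Set δ) (hA : MeasurableSet A) :
    ∫⁻ a, A.indicator (fun a => φ (f a)) a ∂ν
      = ∑ k ∈ Finset.range (M + 1), φ k * ν (A ∩ {a | f a = k}) := by
  have hpt : ∀ a, A.indicator (fun a => φ (f a)) a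
      = ∑ k ∈ Finset.range (M + 1), (A ∩ {a | f a = k}).indicator (fun _ => φ k) a := by
    intro a
    by_cases ha : a ∈ A
    · rw [Set.indicator_of_mem ha]
      rw [Finset.sum_eq_single (f a)]
      · exact (Set.indicator_of_mem (Set.mem_inter ha (show a ∈ {a' | f a' = f a} from rfl)) (fun _ => φ (f a))).symm
      · intro k _ hk
        apply Set.indicator_of_notMem
        rintro ⟨-, h2⟩
        exact hk (h2.symm)
      · intro h
        exact absurd (Finset.mem_range.mpr (Nat.lt_succ_of_le (hfle a))) h
    · rw [Set.indicator_of_notMem ha]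
      symm
      apply Finset.sum_eq_zero
      intro k _
      apply Set.indicator_of_notMem
      rintro ⟨h1, -⟩
      exact ha h1
  rw [lintegral_congr hpt]
  rw [lintegral_finset_sum]
  · apply Finset.sum_congr rfl
    intro k _
    have hmk : MeasurableSet {a | f a = k} := hf (measurableSet_singleton k)
    rw [lintegral_indicator (hA.inter hmk), setLIntegral_const]
  · intro k _
    have hmk : MeasurableSet {a | f a = k} := hf (measurableSet_singleton k)
    exact Measurable.indicator measurable_const (hA.inter hmk)

end Prob

section Prob2

open ProbabilityTheory

variable {m : ℕ} {F : Finset (Fin m) → (Fin m → ℝ) → (Fin m → ℝ)} {lam q : ℝ}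

lemma measurable_count {δ : Type*} [MeasurableSpace δ] {g : δ → Fin m → ℝ}
    (hg : Measurable g) (P : Fin m → Prop) [DecidablePred P] :
    Measurable fun y => (Finset.univ.filter (fun i : Fin m => P i ∧ lam < g y i)).card := by
  have heq : (fun y => (Finset.univ.filter (fun i : Fin m => P i ∧ lam < g y i)).card)
      = fun y => ∑ i : Fin m, if P i ∧ lam < g y i then 1 else 0 := by
    funext y
    rw [Finset.card_filter]
  rw [heq]
  apply Finset.measurable_sum
  intro i _
  apply Measurable.ite _ measurable_const measurable_const
  by_cases hP : P i
  · have : {y : δ | P i ∧ lam < g y i} = {y : δ | lam < g y i} := by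
      ext y; simp [hP]
    rw [this]
    exact measurableSet_lt measurable_const ((measurable_pi_apply i).comp hg)
  · have : {y : δ | P i ∧ lam < g y i} = ∅ := by
      ext y; simp [hP]
    rw [this]
    exact MeasurableSet.empty

lemma perj_bound {Ω : Type*} [MeasurableSpace Ω] (μ : Measure Ω) [IsProbabilityMeasure μ]
    (H0 : Finset (Fin m)) (p : Ω → Fin m → ℝ) (hpmeas : Measurable p)
    (hsuper : Superuniform μ p H0)
    (hF : IsFilter F) (hFmeas : ∀ (R : Finset (Fin m)) (j : Fin m),
      Measurable (fun x : Fin m → ℝ => F R x j))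
    (hsimple : SimpleFilter F)
    (hlam : lam ∈ Set.Ioo (0 : ℝ) 1) (hq : q ∈ Set.Ioo (0 : ℝ) 1)
    (j : Fin m) (hj0 : j ∈ H0)
    (hindepj : IndepFun (fun ω => p ω j)
      (fun ω => (fun i : {i : Fin m // i ≠ j} => p ω i)) μ) :
    ∫⁻ ω, ENNReal.ofReal (termj F lam q j (p ω)) ∂μ
      ≤ ∫⁻ ω, Set.indicator {ω' : Ω | lam < p ω' j}
          (fun ω' => ENNReal.ofReal (q / (1 + ((Finset.univ.filter
            (fun i : Fin m => i ∈ H0 ∧ i ≠ j ∧ lam < p ω' i)).card : ℝ)))) ω ∂μ := by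
  obtain ⟨hlam0, hlam1⟩ := hlam
  obtain ⟨hq0, hq1⟩ := hq
  set X : Ω → ℝ := fun ω => p ω j with hXdef
  set Y : Ω → ({i : Fin m // i ≠ j} → ℝ) := fun ω => (fun i : {i : Fin m // i ≠ j} => p ω i)
    with hYdef
  have hX : Measurable X := (measurable_pi_apply j).comp hpmeas
  have hY : Measurable Y :=
    measurable_pi_lambda _ (fun i => (measurable_pi_apply (i : Fin m)).comp hpmeas)
  haveI : IsProbabilityMeasure (μ.map X) := Measure.isProbabilityMeasure_map hX.aemeasurable
  haveI : IsProbabilityMeasure (μ.map Y) := Measure.isProbabilityMeasure_map hY.aemeasurable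
  have hmapeq : μ.map (fun ω => (X ω, Y ω)) = (μ.map X).prod (μ.map Y) :=
    (indepFun_iff_map_prod_eq_prod_map_map hX.aemeasurable hY.aemeasurable).mp hindepj
  have htermmeas : Measurable (termj F lam q j) :=
    measurable_termj hFmeas hlam0.le hq0.le j
  have hhj : Measurable (fun z : ℝ × ({i : Fin m // i ≠ j} → ℝ) =>
      ENNReal.ofReal (termj F lam q j (embj j z))) :=
    ENNReal.measurable_ofReal.comp (htermmeas.comp (measurable_embj j))
  -- counts as functions of y
  set Dfun : ({i : Fin m // i ≠ j} → ℝ) → ℕ := fun y =>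
    (Finset.univ.filter (fun i : Fin m => (i ∈ H0 ∧ i ≠ j) ∧ lam < embj j (0, y) i)).card
    with hDfun
  have hDmeas : Measurable Dfun := by
    apply measurable_count (lam := lam)
    exact (measurable_embj j).comp (measurable_const.prodMk measurable_id)
  have hDle : ∀ y, Dfun y ≤ m := by
    intro y
    calc Dfun y ≤ (Finset.univ : Finset (Fin m)).card := Finset.card_filter_le _ _
      _ = m := by simp
  -- Step 1: transfer to the product space
  have step1 : ∫⁻ ω, ENNReal.ofReal (termj F lam q j (p ω)) ∂μ
      = ∫⁻ y, ∫⁻ x, ENNReal.ofReal (termj F lam q j (embj j (x, y))) ∂(μ.map X) ∂(μ.map Y) := by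
    have h1 : ∫⁻ ω, ENNReal.ofReal (termj F lam q j (p ω)) ∂μ
        = ∫⁻ z, ENNReal.ofReal (termj F lam q j (embj j z))
            ∂(μ.map (fun ω => (X ω, Y ω))) := by
      rw [lintegral_map hhj (hX.prodMk hY)]
      apply lintegral_congr
      intro ω
      rw [embj_pair (p ω) j]
    rw [h1, hmapeq, lintegral_prod_symm _ hhj.aemeasurable]
  rw [step1]
  -- Step 3: inner bound
  have step3 : ∀ y, ∫⁻ x, ENNReal.ofReal (termj F lam q j (embj j (x, y))) ∂(μ.map X)
      ≤ ENNReal.ofReal (q * (1 - lam) / (1 + (Dfun y : ℝ))) := by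
    intro y
    have hDpos : (0:ℝ) < 1 + (Dfun y : ℝ) := by positivity
    by_cases hcase : ∃ x', 0 < termj F lam q j (embj j (x', y))
    · obtain ⟨x0', hpos⟩ := hcase
      set x0 := embj j (x0', y) with hx0
      set V := normU (F (Rset (tstarStorey F lam q x0) x0) x0) with hVdef
      have hV0 : 0 < V := (termj_pos_facts hF hpos).1
      -- the count used in termj_le_indicator, for the full-index filter
      set Creal : ℝ := ((Finset.univ.filter (fun i : Fin m => i ≠ j ∧ lam < x0 i)).card : ℝ)
        with hCreal
      have hCpos : (0:ℝ) < 1 + Creal := by positivity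
      have hDC : (Dfun y : ℝ) ≤ Creal := by
        rw [hCreal, hDfun]
        have hsub : (Finset.univ.filter
              (fun i : Fin m => (i ∈ H0 ∧ i ≠ j) ∧ lam < embj j (0, y) i))
            ⊆ (Finset.univ.filter (fun i : Fin m => i ≠ j ∧ lam < x0 i)) := by
          intro i hi
          rw [Finset.mem_filter] at hi ⊢
          obtain ⟨hu, ⟨-, hij⟩, hlt⟩ := hi
          refine ⟨hu, hij, ?_⟩
          show lam < embj j (x0', y) i
          rw [embj_apply_ne hij]
          rw [embj_apply_ne hij] at hlt
          exact hlt
        exact_mod_cast Finset.card_le_card hsub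
      set c := q * V * (1 - lam) / (1 + Creal) with hcdef
      have hc0 : 0 ≤ c := by
        apply div_nonneg _ (le_of_lt hCpos)
        have : (0:ℝ) ≤ q * V := mul_nonneg hq0.le hV0.le
        nlinarith
      have hagree : ∀ x' : ℝ, ∀ i, i ≠ j → embj j (x', y) i = x0 i := by
        intro x' i hi
        rw [embj_apply_ne hi, hx0, embj_apply_ne hi]
      have hbound : ∀ x' : ℝ, ENNReal.ofReal (termj F lam q j (embj j (x', y)))
          ≤ Set.indicator {s : ℝ | s ≤ c} (fun _ => ENNReal.ofReal (1 / V)) x' := by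
        intro x'
        have h1 := termj_le_indicator hF hsimple hlam0.le hlam1 hq0.le j x0 hpos
          (embj j (x', y)) (hagree x')
        rw [embj_apply_eq] at h1
        rw [← hVdef, ← hCreal, ← hcdef] at h1
        by_cases hx' : x' ∈ {s : ℝ | s ≤ c}
        · rw [Set.indicator_of_mem hx']
          apply ENNReal.ofReal_le_ofReal
          rw [Set.indicator_of_mem hx'] at h1
          exact h1
        · rw [Set.indicator_of_notMem hx']
          rw [Set.indicator_of_notMem hx'] at h1
          rw [ENNReal.ofReal_of_nonpos h1]
      calc ∫⁻ x, ENNReal.ofReal (termj F lam q j (embj j (x, y))) ∂(μ.map X)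
          ≤ ∫⁻ x, Set.indicator {s : ℝ | s ≤ c} (fun _ => ENNReal.ofReal (1 / V)) x
            ∂(μ.map X) := lintegral_mono hbound
        _ = ENNReal.ofReal (1 / V) * (μ.map X) {s : ℝ | s ≤ c} := by
            have hms : MeasurableSet {s : ℝ | s ≤ c} := measurableSet_Iic
            rw [lintegral_indicator hms, setLIntegral_const]
        _ ≤ ENNReal.ofReal (q * (1 - lam) / (1 + Creal)) := by
            have hmapset : (μ.map X) {s : ℝ | s ≤ c} = μ {ω | p ω j ≤ c} :=
              Measure.map_apply hX (measurableSet_Iic : MeasurableSet {s : ℝ | s ≤ c})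
            have hfrac : 1 / V * c = q * (1 - lam) / (1 + Creal) := by
              have hc' : c = (q * (1 - lam) / (1 + Creal)) * V := by rw [hcdef]; ring
              calc 1 / V * c = (q * (1 - lam) / (1 + Creal)) * (V * (1 / V)) := by
                    rw [hc']; ring
                _ = q * (1 - lam) / (1 + Creal) := by
                    rw [mul_one_div, div_self (ne_of_gt hV0), mul_one]
            by_cases hc1 : c ≤ 1
            · have hmeasle : (μ.map X) {s : ℝ | s ≤ c} ≤ ENNReal.ofReal c := by
                rw [hmapset]
                exact hsuper j hj0 c ⟨hc0, hc1⟩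
              calc ENNReal.ofReal (1 / V) * (μ.map X) {s : ℝ | s ≤ c}
                  ≤ ENNReal.ofReal (1 / V) * ENNReal.ofReal c :=
                    mul_le_mul_right hmeasle _
                _ = ENNReal.ofReal (1 / V * c) :=
                    (ENNReal.ofReal_mul (le_of_lt (one_div_pos.mpr hV0))).symm
                _ = ENNReal.ofReal (q * (1 - lam) / (1 + Creal)) := by rw [hfrac]
            · push_neg at hc1
              calc ENNReal.ofReal (1 / V) * (μ.map X) {s : ℝ | s ≤ c}
                  ≤ ENNReal.ofReal (1 / V) * 1 := mul_le_mul_right prob_le_one _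
                _ = ENNReal.ofReal (1 / V) := mul_one _
                _ ≤ ENNReal.ofReal (q * (1 - lam) / (1 + Creal)) := by
                    apply ENNReal.ofReal_le_ofReal
                    rw [← hfrac]
                    have h1V : 1 / V ≤ c / V :=
                      div_le_div_of_nonneg_right hc1.le hV0.le
                    calc (1:ℝ) / V ≤ c / V := h1V
                      _ = 1 / V * c := by ring
        _ ≤ ENNReal.ofReal (q * (1 - lam) / (1 + (Dfun y : ℝ))) := by
            apply ENNReal.ofReal_le_ofReal
            apply div_le_div_of_nonneg_left _ hDpos _
            · have : (0:ℝ) ≤ q := hq0.le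
              nlinarith
            · linarith
    · push_neg at hcase
      have : ∀ x' : ℝ, ENNReal.ofReal (termj F lam q j (embj j (x', y))) = 0 := by
        intro x'
        exact ENNReal.ofReal_of_nonpos (hcase x')
      rw [lintegral_congr (fun x' => this x'), lintegral_zero]
      exact zero_le
  -- Step 4+5: integrate the inner bound
  have step45 : ∫⁻ y, ∫⁻ x, ENNReal.ofReal (termj F lam q j (embj j (x, y)))
        ∂(μ.map X) ∂(μ.map Y)
      ≤ ∫⁻ y, ENNReal.ofReal (q * (1 - lam) / (1 + (Dfun y : ℝ))) ∂(μ.map Y) :=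
    lintegral_mono step3
  apply le_trans step45
  -- Step 6: decompose over the values of Dfun
  have step6 : ∫⁻ y, ENNReal.ofReal (q * (1 - lam) / (1 + (Dfun y : ℝ))) ∂(μ.map Y)
      = ∑ k ∈ Finset.range (m + 1), ENNReal.ofReal (q * (1 - lam) / (1 + (k : ℝ)))
          * (μ.map Y) {y | Dfun y = k} := by
    have h1 := lintegral_nat_decomp (μ.map Y) Dfun hDmeas m hDle
      (fun k => ENNReal.ofReal (q * (1 - lam) / (1 + (k : ℝ)))) Set.univ MeasurableSet.univ
    simp only [Set.indicator_univ, Set.univ_inter] at h1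
    exact h1
  rw [step6]
  -- Step 7: independence
  have step7 : ∀ k : ℕ, ENNReal.ofReal (q * (1 - lam) / (1 + (k : ℝ)))
        * (μ.map Y) {y | Dfun y = k}
      ≤ ENNReal.ofReal (q / (1 + (k : ℝ)))
        * μ ({ω | lam < p ω j} ∩ {ω | Dfun (Y ω) = k}) := by
    intro k
    have hk : (0:ℝ) < 1 + (k:ℝ) := by positivity
    have hofr : ENNReal.ofReal (q * (1 - lam) / (1 + (k : ℝ)))
        = ENNReal.ofReal (q / (1 + (k : ℝ))) * ENNReal.ofReal (1 - lam) := by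
      rw [← ENNReal.ofReal_mul (by positivity)]
      congr 1
      field_simp
    have hmk : MeasurableSet {y | Dfun y = k} := hDmeas (measurableSet_singleton k)
    have hmapY : (μ.map Y) {y | Dfun y = k} = μ (Y ⁻¹' {y | Dfun y = k}) :=
      Measure.map_apply hY hmk
    have hlamle : ENNReal.ofReal (1 - lam) ≤ μ {ω | lam < p ω j} := by
      have hsup := hsuper j hj0 lam ⟨hlam0.le, hlam1.le⟩
      have hms : MeasurableSet {ω | p ω j ≤ lam} := hX measurableSet_Iic
      have hcompl : {ω | lam < p ω j} = {ω | p ω j ≤ lam}ᶜ := by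
        ext ω; simp [not_le]
      rw [hcompl, prob_compl_eq_one_sub hms]
      calc ENNReal.ofReal (1 - lam) = 1 - ENNReal.ofReal lam := by
            rw [ENNReal.ofReal_sub 1 hlam0.le, ENNReal.ofReal_one]
        _ ≤ 1 - μ {ω | p ω j ≤ lam} := tsub_le_tsub_left hsup 1
    have hindep_sets : μ ({ω | lam < p ω j} ∩ {ω | Dfun (Y ω) = k})
        = μ {ω | lam < p ω j} * μ {ω | Dfun (Y ω) = k} := by
      have h := hindepj.measure_inter_preimage_eq_mul (Set.Ioi lam) {y | Dfun y = k}
        measurableSet_Ioi hmk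
      exact h
    calc ENNReal.ofReal (q * (1 - lam) / (1 + (k : ℝ))) * (μ.map Y) {y | Dfun y = k}
        = ENNReal.ofReal (q / (1 + (k : ℝ)))
            * (ENNReal.ofReal (1 - lam) * μ {ω | Dfun (Y ω) = k}) := by
          rw [hofr, hmapY, mul_assoc]
          rfl
      _ ≤ ENNReal.ofReal (q / (1 + (k : ℝ)))
            * (μ {ω | lam < p ω j} * μ {ω | Dfun (Y ω) = k}) := by
          apply mul_le_mul_right
          exact mul_le_mul_left hlamle _
      _ = ENNReal.ofReal (q / (1 + (k : ℝ)))
            * μ ({ω | lam < p ω j} ∩ {ω | Dfun (Y ω) = k}) := by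
          rw [hindep_sets]
  -- Step 8: reassemble as an integral over Ω
  have hDYle : ∀ ω, Dfun (Y ω) ≤ m := fun ω => hDle (Y ω)
  have hDYmeas : Measurable fun ω => Dfun (Y ω) := hDmeas.comp hY
  have hAmeas : MeasurableSet {ω | lam < p ω j} := hX measurableSet_Ioi
  have step8 : ∑ k ∈ Finset.range (m + 1), ENNReal.ofReal (q / (1 + (k : ℝ)))
        * μ ({ω | lam < p ω j} ∩ {ω | Dfun (Y ω) = k})
      = ∫⁻ ω, Set.indicator {ω' | lam < p ω' j}
          (fun ω' => ENNReal.ofReal (q / (1 + (Dfun (Y ω') : ℝ)))) ω ∂μ := by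
    have h1 := lintegral_nat_decomp μ (fun ω => Dfun (Y ω)) hDYmeas m hDYle
      (fun k => ENNReal.ofReal (q / (1 + (k : ℝ)))) {ω | lam < p ω j} hAmeas
    rw [h1]
  calc ∑ k ∈ Finset.range (m + 1), ENNReal.ofReal (q * (1 - lam) / (1 + (k : ℝ)))
        * (μ.map Y) {y | Dfun y = k}
      ≤ ∑ k ∈ Finset.range (m + 1), ENNReal.ofReal (q / (1 + (k : ℝ)))
        * μ ({ω | lam < p ω j} ∩ {ω | Dfun (Y ω) = k}) :=
        Finset.sum_le_sum (fun k _ => step7 k)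
    _ = ∫⁻ ω, Set.indicator {ω' | lam < p ω' j}
          (fun ω' => ENNReal.ofReal (q / (1 + (Dfun (Y ω') : ℝ)))) ω ∂μ := step8
    _ = ∫⁻ ω, Set.indicator {ω' : Ω | lam < p ω' j}
          (fun ω' => ENNReal.ofReal (q / (1 + ((Finset.univ.filter
            (fun i : Fin m => i ∈ H0 ∧ i ≠ j ∧ lam < p ω' i)).card : ℝ)))) ω ∂μ := by
        apply lintegral_congr
        intro ω
        have hcnt : Dfun (Y ω) = (Finset.univ.filter
            (fun i : Fin m => i ∈ H0 ∧ i ≠ j ∧ lam < p ω i)).card := by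
          show (Finset.univ.filter
            (fun i : Fin m => (i ∈ H0 ∧ i ≠ j) ∧ lam < embj j (0, Y ω) i)).card = _
          congr 1
          apply Finset.filter_congr
          intro i _
          by_cases hij : i = j
          · subst hij
            simp
          · rw [embj_apply_ne hij]
            have h2 : ((0:ℝ), Y ω).2 ⟨i, hij⟩ = p ω i := rfl
            rw [h2]
            constructor
            · rintro ⟨⟨h1, h2⟩, h3⟩; exact ⟨h1, h2, h3⟩
            · rintro ⟨h1, h2, h3⟩; exact ⟨⟨h1, h2⟩, h3⟩
        rw [Set.indicator_apply, Set.indicator_apply]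
        split_ifs with hmem
        · rw [hcnt]
        · rfl

lemma final_pointwise {m : ℕ} {lam q : ℝ} (hq0 : 0 ≤ q) (H0 : Finset (Fin m))
    (v : Fin m → ℝ) :
    ∑ j ∈ H0, (if lam < v j then ENNReal.ofReal (q / (1 + ((Finset.univ.filter
        (fun i : Fin m => i ∈ H0 ∧ i ≠ j ∧ lam < v i)).card : ℝ))) else 0)
      ≤ ENNReal.ofReal q := by
  classical
  set S := Finset.univ.filter (fun i : Fin m => i ∈ H0 ∧ lam < v i) with hS
  set N := S.card with hN
  have hsum : ∑ j ∈ H0, (if lam < v j then ENNReal.ofReal (q / (1 + ((Finset.univ.filter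
        (fun i : Fin m => i ∈ H0 ∧ i ≠ j ∧ lam < v i)).card : ℝ))) else 0)
      = ∑ j ∈ H0.filter (fun j => lam < v j), ENNReal.ofReal (q / (1 + ((Finset.univ.filter
        (fun i : Fin m => i ∈ H0 ∧ i ≠ j ∧ lam < v i)).card : ℝ))) :=
    (Finset.sum_filter _ _).symm
  rw [hsum]
  have key : ∀ j ∈ H0.filter (fun j => lam < v j),
      ENNReal.ofReal (q / (1 + ((Finset.univ.filter
        (fun i : Fin m => i ∈ H0 ∧ i ≠ j ∧ lam < v i)).card : ℝ)))
      = ENNReal.ofReal (q / (N : ℝ)) := by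
    intro j hj
    rw [Finset.mem_filter] at hj
    obtain ⟨hjH0, hjlt⟩ := hj
    have hjS : j ∈ S := by
      rw [hS, Finset.mem_filter]
      exact ⟨Finset.mem_univ j, hjH0, hjlt⟩
    have hfe : Finset.univ.filter (fun i : Fin m => i ∈ H0 ∧ i ≠ j ∧ lam < v i)
        = S.erase j := by
      ext i
      rw [Finset.mem_filter, Finset.mem_erase, hS, Finset.mem_filter]
      constructor
      · rintro ⟨hu, h1, h2, h3⟩; exact ⟨h2, hu, h1, h3⟩
      · rintro ⟨h2, hu, h1, h3⟩; exact ⟨hu, h1, h2, h3⟩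
    have hNpos : 1 ≤ N := Finset.card_pos.mpr ⟨j, hjS⟩
    have hcard : ((S.erase j).card : ℝ) = (N : ℝ) - 1 := by
      rw [Finset.card_erase_of_mem hjS]
      rw [Nat.cast_sub hNpos]
      norm_num
    rw [hfe, hcard]
    congr 1
    ring_nf
  rw [Finset.sum_congr rfl key, Finset.sum_const]
  have hcardN : (H0.filter (fun j => lam < v j)).card = N := by
    rw [hN, hS]
    congr 1
    ext i
    rw [Finset.mem_filter, Finset.mem_filter]
    constructor
    · rintro ⟨h1, h2⟩; exact ⟨Finset.mem_univ i, h1, h2⟩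
    · rintro ⟨-, h1, h2⟩; exact ⟨h1, h2⟩
  rw [hcardN]
  rcases Nat.eq_zero_or_pos N with hN0 | hN0
  · rw [hN0]
    simp
  · have hNne : ((N : ℝ)) ≠ 0 := by
      have : (0:ℝ) < (N:ℝ) := by exact_mod_cast hN0
      linarith
    have : (N : ENNReal) * ENNReal.ofReal (q / (N : ℝ)) = ENNReal.ofReal q := by
      rw [← ENNReal.ofReal_natCast N, ← ENNReal.ofReal_mul (by positivity)]
      rw [mul_div_cancel₀ q hNne]
    rw [nsmul_eq_mul, this]

end Prob2

/-- **Focused Storey BH under independence (Theorem 1(ii), Storey part).**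
Fix `λ ∈ (0,1)`. If the null p-values are superuniform, each null `p_j` is independent of the
remaining coordinates, and the filter is simple, then Focused Storey BH at level `q` controls
the generalized FDR: `E[FDP(U*)] ≤ q` where `U* = F(R(t*,p), p)`. -/
theorem focusedStoreyBH_FDR_control_of_indep_of_simple
    {Ω : Type*} [MeasurableSpace Ω] (μ : Measure Ω) [IsProbabilityMeasure μ]
    {m : ℕ} (H0 : Finset (Fin m)) (p : Ω → Fin m → ℝ)
    (hpmeas : Measurable p)
    (hp01 : ∀ ω i, p ω i ∈ Set.Icc (0 : ℝ) 1)
    (hsuper : Superuniform μ p H0)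
    (hindep : ∀ j ∈ H0, ProbabilityTheory.IndepFun
      (fun ω => p ω j) (fun ω => (fun i : {i : Fin m // i ≠ j} => p ω i)) μ)
    (F : Finset (Fin m) → (Fin m → ℝ) → (Fin m → ℝ))
    (hF : IsFilter F)
    (hFmeas : ∀ (R : Finset (Fin m)) (j : Fin m), Measurable (fun x : Fin m → ℝ => F R x j))
    (hsimple : SimpleFilter F)
    (lam : ℝ) (hlam : lam ∈ Set.Ioo (0 : ℝ) 1)
    (q : ℝ) (hq : q ∈ Set.Ioo (0 : ℝ) 1) :
    ∫ ω, genFDP H0 (F (Rset (tstarStorey F lam q (p ω)) (p ω)) (p ω)) ∂μ ≤ q := by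
  obtain ⟨hlam0, hlam1⟩ := hlam
  obtain ⟨hq0, hq1⟩ := hq
  have hfeq : ∀ ω, genFDP H0 (F (Rset (tstarStorey F lam q (p ω)) (p ω)) (p ω))
      = ∑ j ∈ H0, termj F lam q j (p ω) := by
    intro ω
    simp only [genFDP, termj, normU]
    rw [Finset.sum_div]
  have htermmeas : ∀ j : Fin m, Measurable fun ω => termj F lam q j (p ω) :=
    fun j => (measurable_termj hFmeas hlam0.le hq0.le j).comp hpmeas
  have hfmeas : Measurable fun ω =>
      genFDP H0 (F (Rset (tstarStorey F lam q (p ω)) (p ω)) (p ω)) := by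
    have heq : (fun ω => genFDP H0 (F (Rset (tstarStorey F lam q (p ω)) (p ω)) (p ω)))
        = fun ω => ∑ j ∈ H0, termj F lam q j (p ω) := funext hfeq
    rw [heq]
    exact Finset.measurable_sum _ (fun j _ => htermmeas j)
  have hfnn : ∀ ω, 0 ≤ genFDP H0 (F (Rset (tstarStorey F lam q (p ω)) (p ω)) (p ω)) := by
    intro ω
    rw [hfeq ω]
    exact Finset.sum_nonneg (fun j _ => termj_nonneg hF j (p ω))
  rw [integral_eq_lintegral_of_nonneg_ae (Filter.Eventually.of_forall hfnn)
    hfmeas.aestronglyMeasurable]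
  have hmain : ∫⁻ ω, ENNReal.ofReal
      (genFDP H0 (F (Rset (tstarStorey F lam q (p ω)) (p ω)) (p ω))) ∂μ
      ≤ ENNReal.ofReal q := by
    have h1 : ∀ ω, ENNReal.ofReal
        (genFDP H0 (F (Rset (tstarStorey F lam q (p ω)) (p ω)) (p ω)))
        = ∑ j ∈ H0, ENNReal.ofReal (termj F lam q j (p ω)) := by
      intro ω
      rw [hfeq ω]
      exact ENNReal.ofReal_sum_of_nonneg (fun j _ => termj_nonneg hF j (p ω))
    rw [lintegral_congr h1]
    rw [lintegral_finset_sum _ (fun j _ => (htermmeas j).ennreal_ofReal)]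
    -- apply the per-coordinate bound
    have h2 : ∑ j ∈ H0, ∫⁻ ω, ENNReal.ofReal (termj F lam q j (p ω)) ∂μ
        ≤ ∑ j ∈ H0, ∫⁻ ω, Set.indicator {ω' : Ω | lam < p ω' j}
            (fun ω' => ENNReal.ofReal (q / (1 + ((Finset.univ.filter
              (fun i : Fin m => i ∈ H0 ∧ i ≠ j ∧ lam < p ω' i)).card : ℝ)))) ω ∂μ :=
      Finset.sum_le_sum (fun j hj => perj_bound μ H0 p hpmeas hsuper hF hFmeas hsimple
        ⟨hlam0, hlam1⟩ ⟨hq0, hq1⟩ j hj (hindep j hj))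
    apply le_trans h2
    -- measurability of the indicator integrands
    have hindmeas : ∀ j : Fin m, Measurable fun ω => Set.indicator {ω' : Ω | lam < p ω' j}
        (fun ω' => ENNReal.ofReal (q / (1 + ((Finset.univ.filter
          (fun i : Fin m => i ∈ H0 ∧ i ≠ j ∧ lam < p ω' i)).card : ℝ)))) ω := by
      intro j
      apply Measurable.indicator
      · apply ENNReal.measurable_ofReal.comp
        apply Measurable.div measurable_const
        apply Measurable.add measurable_const
        have hcnt : Measurable fun ω => ((Finset.univ.filter
            (fun i : Fin m => (i ∈ H0 ∧ i ≠ j) ∧ lam < p ω i)).card : ℕ) :=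
          measurable_count (lam := lam) hpmeas (fun i => i ∈ H0 ∧ i ≠ j)
        have heqc : (fun ω => ((Finset.univ.filter
              (fun i : Fin m => i ∈ H0 ∧ i ≠ j ∧ lam < p ω i)).card : ℝ))
            = fun ω => ((Finset.univ.filter
              (fun i : Fin m => (i ∈ H0 ∧ i ≠ j) ∧ lam < p ω i)).card : ℝ) := by
          funext ω
          congr 2
          apply Finset.filter_congr
          intro i _
          rw [and_assoc]
        rw [heqc]
        exact Measurable.comp (measurable_from_top (f := fun n : ℕ => (n : ℝ))) hcnt
      · exact measurableSet_lt measurable_const ((measurable_pi_apply j).comp hpmeas)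
    rw [← lintegral_finset_sum _ (fun j _ => hindmeas j)]
    have h3 : ∀ ω, ∑ j ∈ H0, Set.indicator {ω' : Ω | lam < p ω' j}
        (fun ω' => ENNReal.ofReal (q / (1 + ((Finset.univ.filter
          (fun i : Fin m => i ∈ H0 ∧ i ≠ j ∧ lam < p ω' i)).card : ℝ)))) ω
        ≤ ENNReal.ofReal q := by
      intro ω
      have h4 : ∀ j, Set.indicator {ω' : Ω | lam < p ω' j}
          (fun ω' => ENNReal.ofReal (q / (1 + ((Finset.univ.filter
            (fun i : Fin m => i ∈ H0 ∧ i ≠ j ∧ lam < p ω' i)).card : ℝ)))) ω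
          = (if lam < p ω j then ENNReal.ofReal (q / (1 + ((Finset.univ.filter
            (fun i : Fin m => i ∈ H0 ∧ i ≠ j ∧ lam < p ω i)).card : ℝ))) else 0) := by
        intro j
        rw [Set.indicator_apply]
        rfl
      have h5 := Finset.sum_congr rfl (fun j (_ : j ∈ H0) => h4 j)
      rw [h5]
      exact final_pointwise hq0.le H0 (p ω)
    refine le_trans (lintegral_mono h3) ?_
    rw [lintegral_const, measure_univ, mul_one]
  have hfin : (∫⁻ ω, ENNReal.ofReal
      (genFDP H0 (F (Rset (tstarStorey F lam q (p ω)) (p ω)) (p ω))) ∂μ).toReal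
      ≤ (ENNReal.ofReal q).toReal := ENNReal.toReal_mono ENNReal.ofReal_ne_top hmain
  rw [ENNReal.toReal_ofReal hq0.le] at hfin
  exact hfin
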